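/- If M ≈_P N then M terminates under P iff N terminates under P. -/

import Mathlib

/-- Terms of continuation calculus: names (coded as naturals) and dot. -/
inductive Tm where
  | name : ℕ → Tm
  | dot : Tm → Tm → Tm
deriving DecidableEq

/-- Right-hand sides of rules: names, variables (de Bruijn-style indices
into the left-hand side's variable list), and dot. -/
inductive Rhs where
  | name : ℕ → Rhs
  | var : ℕ → Rhs
  | dot : Rhs → Rhs → Rhs
deriving DecidableEq

/-- A rule `n.x₁.⋯.xₖ → r`: head name, arity `k`, and right-hand side. -/
structure Rule where
  head : ℕ
  arity : ℕ
  rhs : Rhs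
deriving DecidableEq

/-- A program is a finite set of rules. -/
abbrev Program := Finset Rule

/-- Variables occurring in a right-hand side. -/
def Rhs.HasVar : Rhs → ℕ → Prop
  | .name _, _ => False
  | .var w, v => w = v
  | .dot a b, v => a.HasVar v ∨ b.HasVar v

/-- Well-formedness: every variable of a right-hand side occurs in the
left-hand side, and there is at most one rule per head name. -/
def Program.Wf (P : Program) : Prop :=
  (∀ r ∈ P, ∀ v, r.rhs.HasVar v → v < r.arity) ∧
  (∀ r₁ ∈ P, ∀ r₂ ∈ P, r₁.head = r₂.head → r₁ = r₂)

/-- `n.t₁.⋯.tₖ` : left-associated application of a term to a list of terms. -/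
def Tm.apps : Tm → List Tm → Tm
  | h, [] => h
  | h, t :: ts => Tm.apps (h.dot t) ts

/-- Instantiation of a right-hand side with the terms matched by the
left-hand side variables; fails if some variable is out of range. -/
def Rhs.inst (ts : List Tm) : Rhs → Option Tm
  | .name n => some (.name n)
  | .var v => ts[v]?
  | .dot a b => do pure (.dot (← a.inst ts) (← b.inst ts))

/-- One-step evaluation `M →_P N`. -/
def Step (P : Program) (M N : Tm) : Prop :=
  ∃ r ∈ P, ∃ ts : List Tm, ts.length = r.arity ∧
    M = Tm.apps (.name r.head) ts ∧ r.rhs.inst ts = some N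

/-- Multi-step evaluation `M →*_P N`. -/
def Steps (P : Program) : Tm → Tm → Prop := Relation.ReflTransGen (Step P)

/-- `M` is final: it has no successor. -/
def Final (P : Program) (M : Tm) : Prop := ¬ ∃ N, Step P M N

/-- `M` terminates: it evaluates to a final term. -/
def Terminates (P : Program) (M : Tm) : Prop := ∃ N, Steps P M N ∧ Final P N

/-- The name `m` occurs in a term. -/
def Tm.HasName (m : ℕ) : Tm → Prop
  | .name n => n = m
  | .dot a b => a.HasName m ∨ b.HasName m

/-- The name `m` occurs in a right-hand side. -/
def Rhs.HasName (m : ℕ) : Rhs → Prop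
  | .name n => n = m
  | .var _ => False
  | .dot a b => a.HasName m ∨ b.HasName m

/-- The name `m` occurs (is mentioned) in a program. -/
def Program.HasName (P : Program) (m : ℕ) : Prop :=
  ∃ r ∈ P, r.head = m ∨ r.rhs.HasName m

/-- The name `m` is defined by the program (is the head of some rule). -/
def Program.Defines (P : Program) (m : ℕ) : Prop :=
  ∃ r ∈ P, r.head = m

/-- Substitution of a term for a name, `M[fr := t]`. -/
def Tm.subName (m : ℕ) (t : Tm) : Tm → Tm
  | .name n => if n = m then t else .name n
  | .dot a b => .dot (Tm.subName m t a) (Tm.subName m t b)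

/-- Common reduct relation `M =_P N`. -/
def CommonRed (P : Program) (M N : Tm) : Prop :=
  ∃ t, Steps P M t ∧ Steps P N t

/-- Observational equivalence `M ≈_P N`. -/
def ObsEq (P : Program) (M N : Tm) : Prop :=
  ∀ P' : Program, P'.Wf → P ⊆ P' →
    ∀ X : Tm, (Terminates P' (X.dot M) ↔ Terminates P' (X.dot N))

/-- Renaming of names in a term. -/
def Tm.rename (f : ℕ → ℕ) : Tm → Tm
  | .name n => .name (f n)
  | .dot a b => .dot (a.rename f) (b.rename f)

/-- Renaming of names in a right-hand side. -/
def Rhs.rename (f : ℕ → ℕ) : Rhs → Rhs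
  | .name n => .name (f n)
  | .var v => .var v
  | .dot a b => .dot (a.rename f) (b.rename f)

/-- Renaming of names in a rule. -/
def Rule.rename (f : ℕ → ℕ) (r : Rule) : Rule :=
  ⟨f r.head, r.arity, r.rhs.rename f⟩

/-- Renaming of names in a program. -/
def Program.rename (f : ℕ → ℕ) (P : Program) : Program :=
  P.image (Rule.rename f)

/-- The fresh substitution `[n⃗ := m⃗]` as a function on names. -/
def renFun (ns ms : List ℕ) (n : ℕ) : ℕ :=
  ((ns.zip ms).lookup n).getD n

/-- `M` has arity `k` under `P`: `M = n.q₁.⋯.qᵢ` where `n` has a rule of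
arity `i + k`. -/
def Tm.ArityIs (P : Program) (M : Tm) (k : ℕ) : Prop :=
  ∃ r ∈ P, ∃ ts : List Tm, M = Tm.apps (.name r.head) ts ∧ ts.length + k = r.arity

/-! ### Auxiliary lemmas -/

def Tm.maxName : Tm → ℕ
  | .name n => n
  | .dot a b => max a.maxName b.maxName

def Rhs.maxName : Rhs → ℕ
  | .name n => n
  | .var _ => 0
  | .dot a b => max a.maxName b.maxName

def Rule.maxName (r : Rule) : ℕ := max r.head r.rhs.maxName

lemma Tm.hasName_le_maxName {m : ℕ} : ∀ {t : Tm}, t.HasName m → m ≤ t.maxName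
  | .name n, h => by cases h; exact le_refl _
  | .dot a b, h => by
      rcases h with h | h
      · exact le_max_of_le_left (Tm.hasName_le_maxName h)
      · exact le_max_of_le_right (Tm.hasName_le_maxName h)

lemma Rhs.hasName_le_maxName {m : ℕ} : ∀ {r : Rhs}, r.HasName m → m ≤ r.maxName
  | .name n, h => by cases h; exact le_refl _
  | .var _, h => h.elim
  | .dot a b, h => by
      rcases h with h | h
      · exact le_max_of_le_left (Rhs.hasName_le_maxName h)
      · exact le_max_of_le_right (Rhs.hasName_le_maxName h)

lemma hasName_apps {f : ℕ} : ∀ (ts : List Tm) (X : Tm),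
    (Tm.apps X ts).HasName f ↔ X.HasName f ∨ ∃ t ∈ ts, t.HasName f
  | [], X => by simp [Tm.apps]
  | t :: ts, X => by
      rw [Tm.apps, hasName_apps ts]
      simp [Tm.HasName, or_assoc]

lemma apps_isDot (ts : List Tm) : ∀ (a b : Tm), ∃ c d, Tm.apps (Tm.dot a b) ts = Tm.dot c d := by
  induction ts with
  | nil => exact fun a b => ⟨a, b, rfl⟩
  | cons t ts ih => exact fun a b => ih (a.dot b) t

lemma apps_eq_dot : ∀ (ts : List Tm) (h a b : Tm), Tm.apps h ts = a.dot b →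
    (ts = [] ∧ h = a.dot b) ∨ ∃ ts', ts = ts' ++ [b] ∧ Tm.apps h ts' = a
  | [], h, a, b, he => Or.inl ⟨rfl, he⟩
  | t :: ts, h, a, b, he => by
      rcases apps_eq_dot ts (h.dot t) a b he with ⟨h1, h2⟩ | ⟨ts', h1, h2⟩
      · subst h1
        cases h2
        exact Or.inr ⟨[], rfl, rfl⟩
      · exact Or.inr ⟨t :: ts', by simp [h1], h2⟩

lemma inst_no_name {f : ℕ} {ts : List Tm} (hts : ∀ t ∈ ts, ¬ t.HasName f) :
    ∀ {r : Rhs} {Y : Tm}, ¬ r.HasName f → r.inst ts = some Y → ¬ Y.HasName f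
  | .name n, Y, hr, he => by
      simp only [Rhs.inst, Option.some.injEq] at he
      subst he
      exact hr
  | .var v, Y, _, he => by
      simp only [Rhs.inst] at he
      exact hts Y (List.mem_of_getElem? he)
  | .dot a b, Y, hr, he => by
      simp only [Rhs.inst, Option.bind_eq_bind, Option.pure_def, Option.bind_eq_some_iff,
        Option.some.injEq] at he
      rcases he with ⟨x, hx, y, hy, hxy⟩
      subst hxy
      rintro (hh | hh)
      · exact inst_no_name hts (fun hn => hr (Or.inl hn)) hx hh
      · exact inst_no_name hts (fun hn => hr (Or.inr hn)) hy hh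

section Fresh

variable {P : Program} {f : ℕ} (hf : ¬ P.HasName f)

/-- The fresh identity rule `f.x → x`. -/
def idRule (f : ℕ) : Rule := ⟨f, 1, .var 0⟩

include hf in
lemma wf_insert (hP : P.Wf) : (insert (idRule f) P).Wf := by
  constructor
  · intro r hr v hv
    rcases Finset.mem_insert.1 hr with rfl | hr
    · simp only [idRule, Rhs.HasVar] at hv ⊢
      omega
    · exact hP.1 r hr v hv
  · intro r₁ h₁ r₂ h₂ hh
    rcases Finset.mem_insert.1 h₁ with rfl | h₁ <;> rcases Finset.mem_insert.1 h₂ with rfl | h₂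
    · rfl
    · exact absurd ⟨r₂, h₂, Or.inl hh.symm⟩ hf
    · exact absurd ⟨r₁, h₁, Or.inl hh⟩ hf
    · exact hP.2 r₁ h₁ r₂ h₂ hh

include hf in
lemma step_no_name {X Y : Tm} (hX : ¬ X.HasName f) (h : Step P X Y) : ¬ Y.HasName f := by
  rcases h with ⟨r, hr, ts, hlen, rfl, hinst⟩
  rw [hasName_apps] at hX
  push_neg at hX
  exact inst_no_name hX.2 (fun hn => hf ⟨r, hr, Or.inr hn⟩) hinst

omit hf in
lemma step_insert_iff {X Y : Tm} (hX : ¬ X.HasName f) :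
    Step (insert (idRule f) P) X Y ↔ Step P X Y := by
  constructor
  · rintro ⟨r, hr, ts, hlen, rfl, hinst⟩
    rcases Finset.mem_insert.1 hr with rfl | hr
    · exact absurd ((hasName_apps ts _).2 (Or.inl (by simp [idRule, Tm.HasName]))) hX
    · exact ⟨r, hr, ts, hlen, rfl, hinst⟩
  · rintro ⟨r, hr, ts, hlen, rfl, hinst⟩
    exact ⟨r, Finset.mem_insert_of_mem hr, ts, hlen, rfl, hinst⟩

include hf in
lemma steps_insert {X Y : Tm} (hX : ¬ X.HasName f)
    (h : Steps (insert (idRule f) P) X Y) : Steps P X Y ∧ ¬ Y.HasName f := by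
  induction h with
  | refl => exact ⟨Relation.ReflTransGen.refl, hX⟩
  | tail _ hbc ih =>
      have hstep := (step_insert_iff ih.2).1 hbc
      exact ⟨ih.1.tail hstep, step_no_name hf ih.2 hstep⟩

include hf in
lemma terminates_insert_iff {X : Tm} (hX : ¬ X.HasName f) :
    Terminates (insert (idRule f) P) X ↔ Terminates P X := by
  constructor
  · rintro ⟨Z, hs, hfin⟩
    obtain ⟨hs', hZ⟩ := steps_insert hf hX hs
    exact ⟨Z, hs', fun ⟨W, hW⟩ => hfin ⟨W, (step_insert_iff hZ).2 hW⟩⟩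
  · rintro ⟨Z, hs, hfin⟩
    have hs' : Steps (insert (idRule f) P) X Z :=
      Relation.ReflTransGen.mono (fun a b (hab : Step P a b) => (⟨hab.choose, Finset.mem_insert_of_mem
        hab.choose_spec.1, hab.choose_spec.2⟩ : Step _ a b)) _ _ hs
    obtain ⟨_, hZ⟩ := steps_insert hf hX hs'
    exact ⟨Z, hs', fun ⟨W, hW⟩ => hfin ⟨W, (step_insert_iff hZ).1 hW⟩⟩

lemma step_id (M : Tm) : Step (insert (idRule f) P) ((Tm.name f).dot M) M :=
  ⟨idRule f, Finset.mem_insert_self _ _, [M], rfl, rfl, by simp [idRule, Rhs.inst]⟩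

include hf in
lemma step_id_unique {M Y : Tm} (h : Step (insert (idRule f) P) ((Tm.name f).dot M) Y) :
    Y = M := by
  rcases h with ⟨r, hr, ts, hlen, heq, hinst⟩
  rcases apps_eq_dot ts _ _ _ heq.symm with ⟨rfl, h2⟩ | ⟨ts', rfl, h2⟩
  · exact absurd h2 (by simp [Tm.apps])
  · have hts' : ts' = [] := by
      cases ts' with
      | nil => rfl
      | cons a l =>
          rw [Tm.apps] at h2
          obtain ⟨c, d, hcd⟩ := apps_isDot l _ _
          rw [hcd] at h2
          exact absurd h2 (by simp)
    subst hts'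
    rw [Tm.apps] at h2
    cases h2
    have hrid : r = idRule r.head := by
      rcases Finset.mem_insert.1 hr with h' | hr'
      · exact h'
      · exact absurd ⟨r, hr', Or.inl rfl⟩ hf
    have hrhs : r.rhs = Rhs.var 0 := congrArg Rule.rhs hrid
    rw [hrhs] at hinst
    simpa [Rhs.inst] using hinst.symm

include hf in
lemma terminates_dot_iff (M : Tm) :
    Terminates (insert (idRule f) P) ((Tm.name f).dot M) ↔
      Terminates (insert (idRule f) P) M := by
  constructor
  · rintro ⟨Z, hs, hfin⟩
    rcases (Relation.ReflTransGen.cases_head hs) with rfl | ⟨b, hb, hbZ⟩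
    · exact absurd ⟨M, step_id M⟩ hfin
    · rw [step_id_unique hf hb] at hbZ
      exact ⟨Z, hbZ, hfin⟩
  · rintro ⟨Z, hs, hfin⟩
    exact ⟨Z, Relation.ReflTransGen.head (step_id M) hs, hfin⟩

end Fresh

theorem obsEq_terminates_iff (P : Program) (hP : P.Wf) (M N : Tm)
    (h : ObsEq P M N) : Terminates P M ↔ Terminates P N := by
  set f : ℕ := max (max (P.sup Rule.maxName) M.maxName) N.maxName + 1 with hfdef
  have hfP : ¬ P.HasName f := by
    rintro ⟨r, hr, hh⟩
    have h1 : r.maxName ≤ P.sup Rule.maxName := Finset.le_sup hr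
    have hle : f ≤ r.maxName := by
      rcases hh with h' | h'
      · exact h'.symm.le.trans (le_max_left _ _)
      · exact le_max_of_le_right (Rhs.hasName_le_maxName h')
    have h2 : P.sup Rule.maxName < f := by
      rw [hfdef]
      exact Nat.lt_succ_of_le (le_max_of_le_left (le_max_left _ _))
    exact absurd (hle.trans h1) (not_le.2 h2)
  have hfM : ¬ M.HasName f := fun hh => by
    have h1 := Tm.hasName_le_maxName hh
    have h2 : M.maxName < f := by
      rw [hfdef]
      exact Nat.lt_succ_of_le (le_max_of_le_left (le_max_right _ _))
    exact absurd h1 (not_le.2 h2)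
  have hfN : ¬ N.HasName f := fun hh => by
    have h1 := Tm.hasName_le_maxName hh
    have h2 : N.maxName < f := by
      rw [hfdef]
      exact Nat.lt_succ_of_le (le_max_right _ _)
    exact absurd h1 (not_le.2 h2)
  have hwf := wf_insert hfP hP
  have hsub : P ⊆ insert (idRule f) P := Finset.subset_insert _ _
  have hobs := h (insert (idRule f) P) hwf hsub (Tm.name f)
  rw [terminates_dot_iff hfP M, terminates_dot_iff hfP N,
    terminates_insert_iff hfP hfM, terminates_insert_iff hfP hfN] at hobs
  exact hobs
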